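/- Let γ > 1, q > 1, and let 𝐠 : ℝ^{2d+1} → [0,∞) be measurable with 𝐠 supported in Q_γ and 𝐠 ∈ L^q. Suppose: (a) for every z₀ ∈ Q_γ and every r > (2/3)ζ(z₀) with Q_r(z₀) ⊆ Q_γ one has ⨍_{Q_r(z₀)} 𝐠^q ≤ 1, where ζ is the localization function of Q_γ. Fix s > 1 and let 𝒢 be the union of all kinetic cylinders Q_r(z₀) ⊆ Q_γ with z₀ ∈ Q_γ, r ≤ ζ(z₀), satisfying ⨍_{5Q_r(z₀)} 𝐠^q < s^q ≤ ⨍_{Q_r(z₀)} 𝐠^q. Then the superlevel set {𝐠 > s} ∩ Q_γ is contained in 𝒢 up to a Lebesgue-null set. -/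

import Mathlib

open MeasureTheory Set Filter
open scoped ENNReal Topology

/-- The Galilean group law on `ℝ × ℝᵈ × ℝᵈ`. -/
noncomputable def kMul {d : ℕ} (z₀ z : ℝ × EuclideanSpace ℝ (Fin d) × EuclideanSpace ℝ (Fin d)) :
    ℝ × EuclideanSpace ℝ (Fin d) × EuclideanSpace ℝ (Fin d) :=
  (z₀.1 + z.1, z₀.2.1 + z.2.1 + z.1 • z₀.2.2, z₀.2.2 + z.2.2)

/-- The kinetic cylinder of radius `r` centered at `z₀`. -/
def kCyl {d : ℕ} (r : ℝ) (z₀ : ℝ × EuclideanSpace ℝ (Fin d) × EuclideanSpace ℝ (Fin d)) :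
    Set (ℝ × EuclideanSpace ℝ (Fin d) × EuclideanSpace ℝ (Fin d)) :=
  {z | -r ^ 2 < z.1 - z₀.1 ∧ z.1 - z₀.1 ≤ 0 ∧
    ‖z.2.1 - z₀.2.1 - (z.1 - z₀.1) • z₀.2.2‖ < r ^ 3 ∧ ‖z.2.2 - z₀.2.2‖ < r}

/-- The shifted and scaled cylinder `5Q_r(z₀)`. -/
noncomputable def kCyl5 {d : ℕ} (r : ℝ)
    (z₀ : ℝ × EuclideanSpace ℝ (Fin d) × EuclideanSpace ℝ (Fin d)) :
    Set (ℝ × EuclideanSpace ℝ (Fin d) × EuclideanSpace ℝ (Fin d)) :=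
  kCyl (5 * r) (kMul z₀ (min (-z₀.1) (12 * r ^ 2), 0, 0))

/-- The localization function `ζ` of the cylinder `Q_γ`. -/
noncomputable def kZeta {d : ℕ} (γ : ℝ)
    (z : ℝ × EuclideanSpace ℝ (Fin d) × EuclideanSpace ℝ (Fin d)) : ℝ :=
  (1 / 2) * min (max (γ - ‖z.2.2‖) 0 / 5)
    (min (Real.sqrt (max (γ ^ 2 + z.1) 0 / 13))
      (Real.sqrt (max (γ ^ 3 - ‖z.2.1‖) 0 / (25 * γ))))

/-- The average of a nonnegative function over a set. -/
noncomputable def kAvg {d : ℕ}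
    (S : Set (ℝ × EuclideanSpace ℝ (Fin d) × EuclideanSpace ℝ (Fin d)))
    (F : ℝ × EuclideanSpace ℝ (Fin d) × EuclideanSpace ℝ (Fin d) → ℝ) : ℝ≥0∞ :=
  (∫⁻ z in S, ENNReal.ofReal (F z)) / volume S

section Aux
variable {d : ℕ}

local notation "KS" => ℝ × EuclideanSpace ℝ (Fin d) × EuclideanSpace ℝ (Fin d)

lemma mem_kCyl0 {γ : ℝ} {z : KS} :
    z ∈ kCyl γ ((0,0,0) : KS) ↔ -γ^2 < z.1 ∧ z.1 ≤ 0 ∧ ‖z.2.1‖ < γ^3 ∧ ‖z.2.2‖ < γ := by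
  simp [kCyl]

lemma kZeta_nonneg (γ : ℝ) (z : KS) : 0 ≤ kZeta γ z := by
  unfold kZeta
  apply mul_nonneg (by norm_num)
  refine le_min (by positivity) (le_min (Real.sqrt_nonneg _) (Real.sqrt_nonneg _))

lemma kZeta_bounds {γ : ℝ} (hγ : 1 < γ) {z : KS} (hz : z ∈ kCyl γ ((0,0,0):KS)) :
    0 < kZeta γ z ∧ 10 * kZeta γ z ≤ γ - ‖z.2.2‖ ∧
      52 * kZeta γ z ^ 2 ≤ γ^2 + z.1 ∧ 100 * γ * kZeta γ z ^ 2 ≤ γ^3 - ‖z.2.1‖ := by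
  rw [mem_kCyl0] at hz
  obtain ⟨h1, h2, h3, h4⟩ := hz
  have hγ0 : (0:ℝ) < γ := by linarith
  have hv : (0:ℝ) < γ - ‖z.2.2‖ := by linarith
  have ht : (0:ℝ) < γ^2 + z.1 := by linarith
  have hx : (0:ℝ) < γ^3 - ‖z.2.1‖ := by linarith
  have hmv : max (γ - ‖z.2.2‖) 0 = γ - ‖z.2.2‖ := max_eq_left hv.le
  have hmt : max (γ^2 + z.1) 0 = γ^2 + z.1 := max_eq_left ht.le
  have hmx : max (γ^3 - ‖z.2.1‖) 0 = γ^3 - ‖z.2.1‖ := max_eq_left hx.le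
  have key : ∀ w : ℝ, w = kZeta γ z → 0 < w ∧ 10 * w ≤ γ - ‖z.2.2‖ ∧
      52 * w^2 ≤ γ^2 + z.1 ∧ 100 * γ * w^2 ≤ γ^3 - ‖z.2.1‖ := by
    intro w hw
    have hw' : 2 * w = min ((γ - ‖z.2.2‖)/5)
        (min (Real.sqrt ((γ^2 + z.1)/13)) (Real.sqrt ((γ^3 - ‖z.2.1‖)/(25*γ)))) := by
      rw [hw]; unfold kZeta; rw [hmv, hmt, hmx]; ring
    have hpos : 0 < 2 * w := by
      rw [hw']
      refine lt_min (by positivity) (lt_min (Real.sqrt_pos.mpr (by positivity))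
        (Real.sqrt_pos.mpr (by positivity)))
    have hle1 : 2 * w ≤ (γ - ‖z.2.2‖)/5 := hw' ▸ min_le_left _ _
    have hle2 : 2 * w ≤ Real.sqrt ((γ^2 + z.1)/13) :=
      hw' ▸ (min_le_right _ _).trans (min_le_left _ _)
    have hle3 : 2 * w ≤ Real.sqrt ((γ^3 - ‖z.2.1‖)/(25*γ)) :=
      hw' ▸ (min_le_right _ _).trans (min_le_right _ _)
    have hsq2 : (2*w)^2 ≤ (γ^2 + z.1)/13 := by
      have := Real.sq_sqrt (by positivity : (0:ℝ) ≤ (γ^2 + z.1)/13)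
      nlinarith [Real.sqrt_nonneg ((γ^2 + z.1)/13)]
    have hsq3 : (2*w)^2 ≤ (γ^3 - ‖z.2.1‖)/(25*γ) := by
      have := Real.sq_sqrt (by positivity : (0:ℝ) ≤ (γ^3 - ‖z.2.1‖)/(25*γ))
      nlinarith [Real.sqrt_nonneg ((γ^3 - ‖z.2.1‖)/(25*γ))]
    have hsq3' : (2*w)^2 * (25*γ) ≤ γ^3 - ‖z.2.1‖ := (le_div_iff₀ (by positivity)).mp hsq3
    exact ⟨by linarith, by linarith, by nlinarith, by nlinarith⟩
  exact key _ rfl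

lemma kCyl_subset {γ : ℝ} (hγ : 1 < γ) {z₀ : KS} (hz₀ : z₀ ∈ kCyl γ ((0,0,0):KS))
    {ρ : ℝ} (hρ : 0 < ρ) (hρζ : ρ ≤ kZeta γ z₀) : kCyl ρ z₀ ⊆ kCyl γ ((0,0,0):KS) := by
  obtain ⟨hζpos, hζv, hζt, hζx⟩ := kZeta_bounds hγ hz₀
  rw [mem_kCyl0] at hz₀
  obtain ⟨h1, h2, h3, h4⟩ := hz₀
  have hγ0 : (0:ℝ) < γ := by linarith
  have hv0 : (0:ℝ) ≤ ‖z₀.2.2‖ := norm_nonneg _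
  have hρζ2 : ρ^2 ≤ kZeta γ z₀ ^ 2 := by nlinarith
  intro w hw
  obtain ⟨g1, g2, g3, g4⟩ := hw
  rw [mem_kCyl0]
  refine ⟨by nlinarith, by linarith, ?_, ?_⟩
  · have hw1 : w.2.1 = z₀.2.1 + (w.2.1 - z₀.2.1 - (w.1 - z₀.1) • z₀.2.2)
        + (w.1 - z₀.1) • z₀.2.2 := by abel
    have hb : ‖z₀.2.1 + (w.2.1 - z₀.2.1 - (w.1 - z₀.1) • z₀.2.2) + (w.1 - z₀.1) • z₀.2.2‖
        ≤ ‖z₀.2.1‖ + ‖w.2.1 - z₀.2.1 - (w.1 - z₀.1) • z₀.2.2‖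
        + ‖(w.1 - z₀.1) • z₀.2.2‖ := norm_add₃_le
    rw [← hw1] at hb
    rw [norm_smul, Real.norm_eq_abs] at hb
    have habs : |w.1 - z₀.1| < ρ^2 := by
      rw [abs_lt]; constructor <;> nlinarith
    have hmm : |w.1 - z₀.1| * ‖z₀.2.2‖ ≤ ρ^2 * γ :=
      mul_le_mul habs.le h4.le hv0 (by positivity)
    have hζγ : 10 * kZeta γ z₀ ≤ γ := by linarith
    nlinarith [hρζ, hζpos, mul_le_mul hρζ hρζ2 (by positivity) (kZeta_nonneg γ z₀)]
  · have hns : ‖w.2.2‖ - ‖z₀.2.2‖ ≤ ‖w.2.2 - z₀.2.2‖ := norm_sub_norm_le _ _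
    nlinarith

lemma kMul_shift (z : KS) (σ : ℝ) :
    kMul z ((σ, 0, 0) : KS) = (z.1 + σ, z.2.1 + σ • z.2.2, z.2.2) := by
  simp [kMul]

set_option maxHeartbeats 2000000 in
lemma kShift {γ : ℝ} (hγ : 1 < γ) {z : KS} (hz : z ∈ kCyl γ ((0,0,0):KS))
    {σ : ℝ} (hσ0 : 0 ≤ σ) (hσt : σ ≤ -z.1) (hσζ : σ ≤ kZeta γ z ^ 2 / 2) :
    kMul z ((σ,0,0) : KS) ∈ kCyl γ ((0,0,0):KS) ∧
    (9/10) * kZeta γ z ≤ kZeta γ (kMul z ((σ,0,0):KS)) ∧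
    kZeta γ (kMul z ((σ,0,0):KS)) ≤ (11/10) * kZeta γ z := by
  obtain ⟨hζpos, hζv, hζt, hζx⟩ := kZeta_bounds hγ hz
  rw [mem_kCyl0] at hz
  obtain ⟨h1, h2, h3, h4⟩ := hz
  have hγ0 : (0:ℝ) < γ := by linarith
  rw [kMul_shift]
  set ζ := kZeta γ z with hζdef
  have hxs : ‖z.2.1 + σ • z.2.2‖ ≤ ‖z.2.1‖ + σ * γ := by
    have h : ‖z.2.1 + σ • z.2.2‖ ≤ ‖z.2.1‖ + ‖σ • z.2.2‖ := norm_add_le _ _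
    rw [norm_smul, Real.norm_eq_abs, abs_of_nonneg hσ0] at h
    nlinarith [norm_nonneg z.2.2]
  have hxs' : ‖z.2.1‖ - σ * γ ≤ ‖z.2.1 + σ • z.2.2‖ := by
    have hE : z.2.1 + σ • z.2.2 + (-σ) • z.2.2 = z.2.1 := by
      rw [neg_smul]; abel
    have h : ‖z.2.1 + σ • z.2.2 + (-σ) • z.2.2‖
        ≤ ‖z.2.1 + σ • z.2.2‖ + ‖(-σ) • z.2.2‖ := norm_add_le _ _
    rw [hE, norm_smul, Real.norm_eq_abs, abs_neg, abs_of_nonneg hσ0] at h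
    nlinarith [norm_nonneg z.2.2]
  have hζ2 : σ * γ ≤ γ * ζ^2 / 2 := by nlinarith
  have hmem : ((z.1 + σ, z.2.1 + σ • z.2.2, z.2.2) : KS) ∈ kCyl γ ((0,0,0):KS) := by
    rw [mem_kCyl0]
    dsimp only
    exact ⟨by nlinarith, by linarith, by nlinarith, h4⟩
  refine ⟨hmem, ?_, ?_⟩
  all_goals
    have hA : max (γ - ‖z.2.2‖) 0 = γ - ‖z.2.2‖ := max_eq_left (by linarith)
  all_goals
    have hBm : max (γ^2 + z.1) 0 = γ^2 + z.1 := max_eq_left (by nlinarith)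
  all_goals
    have hBm' : max (γ^2 + (z.1 + σ)) 0 = γ^2 + (z.1 + σ) := max_eq_left (by nlinarith)
  all_goals
    have hCm : max (γ^3 - ‖z.2.1‖) 0 = γ^3 - ‖z.2.1‖ := max_eq_left (by nlinarith)
  all_goals
    have hCm' : max (γ^3 - ‖z.2.1 + σ • z.2.2‖) 0 = γ^3 - ‖z.2.1 + σ • z.2.2‖ :=
      max_eq_left (by nlinarith)
  all_goals
    have hζ'def : kZeta γ ((z.1 + σ, z.2.1 + σ • z.2.2, z.2.2) : KS)
        = (1/2) * min ((γ - ‖z.2.2‖)/5)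
          (min (Real.sqrt ((γ^2 + (z.1 + σ))/13))
            (Real.sqrt ((γ^3 - ‖z.2.1 + σ • z.2.2‖)/(25*γ)))) := by
      unfold kZeta
      dsimp only
      rw [hA, hBm', hCm']
  all_goals
    have hζeq : 2 * ζ = min ((γ - ‖z.2.2‖)/5)
        (min (Real.sqrt ((γ^2 + z.1)/13)) (Real.sqrt ((γ^3 - ‖z.2.1‖)/(25*γ)))) := by
      rw [hζdef]; unfold kZeta; rw [hA, hBm, hCm]; ring
  all_goals rw [hζ'def]
  · -- lower bound
    rw [show (9/10) * ζ = (1/2) * ((9/5) * ζ) by ring]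
    apply mul_le_mul_of_nonneg_left _ (by norm_num)
    refine le_min (by linarith) (le_min ?_ ?_)
    · rw [Real.le_sqrt (by positivity) (by nlinarith)]
      nlinarith
    · rw [Real.le_sqrt (by positivity) (div_nonneg (by nlinarith) (by positivity))]
      rw [le_div_iff₀ (by positivity)]
      nlinarith
  · -- upper bound
    have hsB : Real.sqrt ((γ^2 + z.1)/13) ^ 2 = (γ^2 + z.1)/13 :=
      Real.sq_sqrt (div_nonneg (by nlinarith) (by norm_num))
    have hsC : Real.sqrt ((γ^3 - ‖z.2.1‖)/(25*γ)) ^ 2 = (γ^3 - ‖z.2.1‖)/(25*γ) :=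
      Real.sq_sqrt (div_nonneg (by nlinarith) (by positivity))
    rcases le_total ((γ - ‖z.2.2‖)/5)
        (min (Real.sqrt ((γ^2 + z.1)/13)) (Real.sqrt ((γ^3 - ‖z.2.1‖)/(25*γ)))) with hc | hc
    · have hAeq : 2 * ζ = (γ - ‖z.2.2‖)/5 := by rw [hζeq, min_eq_left hc]
      refine le_trans (mul_le_mul_of_nonneg_left (min_le_left _ _) (by norm_num)) ?_
      linarith
    · have h2ζ : 2 * ζ = min (Real.sqrt ((γ^2 + z.1)/13))
          (Real.sqrt ((γ^3 - ‖z.2.1‖)/(25*γ))) := by rw [hζeq, min_eq_right hc]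
      rcases le_total (Real.sqrt ((γ^2 + z.1)/13))
          (Real.sqrt ((γ^3 - ‖z.2.1‖)/(25*γ))) with hc2 | hc2
      · have hB2ζ : Real.sqrt ((γ^2 + z.1)/13) = 2 * ζ := by rw [h2ζ, min_eq_left hc2]
        have hBval : (γ^2 + z.1)/13 = (2*ζ)^2 := by rw [← hsB, hB2ζ]
        have hkey : Real.sqrt ((γ^2 + (z.1 + σ))/13) ≤ (11/5) * ζ := by
          rw [show (11/5) * ζ = Real.sqrt (((11/5)*ζ)^2) from
            (Real.sqrt_sq (by positivity)).symm]
          apply Real.sqrt_le_sqrt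
          nlinarith
        refine le_trans (mul_le_mul_of_nonneg_left
          ((min_le_right _ _).trans (min_le_left _ _)) (by norm_num : (0:ℝ) ≤ 1/2)) ?_
        linarith
      · have hC2ζ : Real.sqrt ((γ^3 - ‖z.2.1‖)/(25*γ)) = 2 * ζ := by
          rw [h2ζ, min_eq_right hc2]
        have hCval : (γ^3 - ‖z.2.1‖)/(25*γ) = (2*ζ)^2 := by rw [← hsC, hC2ζ]
        have hCval' : γ^3 - ‖z.2.1‖ = (2*ζ)^2 * (25*γ) := by
          rw [← hCval]; field_simp
        have hkey : Real.sqrt ((γ^3 - ‖z.2.1 + σ • z.2.2‖)/(25*γ)) ≤ (11/5) * ζ := by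
          rw [show (11/5) * ζ = Real.sqrt (((11/5)*ζ)^2) from
            (Real.sqrt_sq (by positivity)).symm]
          apply Real.sqrt_le_sqrt
          rw [div_le_iff₀ (by positivity)]
          nlinarith
        refine le_trans (mul_le_mul_of_nonneg_left
          ((min_le_right _ _).trans (min_le_right _ _)) (by norm_num : (0:ℝ) ≤ 1/2)) ?_
        linarith

lemma scalar_id (t r : ℝ) (ht : t ≤ 0) :
    min (-t) (r^2/2) + min (-(t + min (-t) (r^2/2))) (12*r^2) = min (-t) ((5*r)^2/2) := by
  have hr2 : (0:ℝ) ≤ r^2 := sq_nonneg r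
  rcases le_total (-t) (r^2/2) with h | h
  · rw [min_eq_left h, min_eq_left (by nlinarith : -t ≤ (5*r)^2/2)]
    have h0 : -(t + -t) = (0:ℝ) := by ring
    rw [h0, min_eq_left (by positivity : (0:ℝ) ≤ 12*r^2)]
    ring
  · rw [min_eq_right h]
    rcases le_total (-(t + r^2/2)) (12*r^2) with h2 | h2
    · rw [min_eq_left h2, min_eq_left (by nlinarith : -t ≤ (5*r)^2/2)]
      ring
    · rw [min_eq_right h2, min_eq_right (by nlinarith : (5*r)^2/2 ≤ -t)]
      ring

lemma kCyl5_eq {z : KS} (hz1 : z.1 ≤ 0) (r : ℝ) :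
    kCyl5 r (kMul z ((min (-z.1) (r^2/2), 0, 0) : KS))
      = kCyl (5*r) (kMul z ((min (-z.1) ((5*r)^2/2), 0, 0) : KS)) := by
  unfold kCyl5
  rw [kMul_shift, kMul_shift, kMul_shift]
  dsimp only
  have hs := scalar_id z.1 r hz1
  have h1 : z.1 + min (-z.1) (r^2/2) + min (-(z.1 + min (-z.1) (r^2/2))) (12*r^2)
      = z.1 + min (-z.1) ((5*r)^2/2) := by linarith
  have h2 : z.2.1 + (min (-z.1) (r^2/2)) • z.2.2
        + (min (-(z.1 + min (-z.1) (r^2/2))) (12*r^2)) • z.2.2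
      = z.2.1 + (min (-z.1) ((5*r)^2/2)) • z.2.2 := by
    rw [add_assoc, ← add_smul, hs]
  rw [h1, h2]

lemma measurableSet_kCyl (r : ℝ) (z₀ : KS) : MeasurableSet (kCyl r z₀) := by
  have h1 : Measurable fun z : KS => z.1 - z₀.1 := measurable_fst.sub measurable_const
  have h2 : Measurable fun z : KS => ‖z.2.1 - z₀.2.1 - (z.1 - z₀.1) • z₀.2.2‖ := by
    apply Continuous.measurable
    fun_prop
  have h3 : Measurable fun z : KS => ‖z.2.2 - z₀.2.2‖ := by
    apply Continuous.measurable
    fun_prop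
  have he : kCyl r z₀ = {z : KS | -r^2 < z.1 - z₀.1} ∩ ({z : KS | z.1 - z₀.1 ≤ 0} ∩
      ({z : KS | ‖z.2.1 - z₀.2.1 - (z.1 - z₀.1) • z₀.2.2‖ < r^3} ∩
       {z : KS | ‖z.2.2 - z₀.2.2‖ < r})) := rfl
  rw [he]
  exact (measurableSet_lt measurable_const h1).inter
    ((measurableSet_le h1 measurable_const).inter
      ((measurableSet_lt h2 measurable_const).inter (measurableSet_lt h3 measurable_const)))

lemma mem_kCyl_self {z : KS} (hz1 : z.1 ≤ 0) {r : ℝ} (hr : 0 < r) :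
    z ∈ kCyl r (kMul z ((min (-z.1) (r^2/2), 0, 0) : KS)) := by
  rw [kMul_shift]
  set σ := min (-z.1) (r^2/2) with hσ
  have hσ0 : 0 ≤ σ := le_min (by linarith) (by positivity)
  have hσle : σ ≤ r^2/2 := min_le_right _ _
  refine ⟨by dsimp only; nlinarith, by dsimp only; nlinarith, ?_, ?_⟩
  · dsimp only
    have hv : z.2.1 - (z.2.1 + σ • z.2.2) - (z.1 - (z.1 + σ)) • z.2.2
        = (0 : EuclideanSpace ℝ (Fin d)) := by
      have : z.1 - (z.1 + σ) = -σ := by ring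
      rw [this, neg_smul]
      abel
    rw [hv, norm_zero]
    positivity
  · dsimp only
    rw [sub_self, norm_zero]
    exact hr

end Aux

set_option maxHeartbeats 1000000 in
theorem stmt11 {d : ℕ} (γ q : ℝ) (hγ : 1 < γ) (hq : 1 < q)
    (G : ℝ × EuclideanSpace ℝ (Fin d) × EuclideanSpace ℝ (Fin d) → ℝ)
    (hGmeas : Measurable G) (hGnonneg : ∀ z, 0 ≤ G z)
    (hGsupp : Function.support G ⊆
      kCyl γ ((0, 0, 0) : ℝ × EuclideanSpace ℝ (Fin d) × EuclideanSpace ℝ (Fin d)))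
    (hGLq : MemLp G (ENNReal.ofReal q))
    -- hypothesis (a): normalization on large cylinders
    (hnorm : ∀ z₀ ∈ kCyl γ
        ((0, 0, 0) : ℝ × EuclideanSpace ℝ (Fin d) × EuclideanSpace ℝ (Fin d)),
      ∀ r : ℝ, 0 < r → (2 / 3) * kZeta γ z₀ < r → kCyl r z₀ ⊆ kCyl γ (0, 0, 0) →
        kAvg (kCyl r z₀) (fun z => G z ^ q) ≤ 1)
    -- the Lebesgue differentiation theorem along kinetic cylinders
    (hLeb : ∀ᵐ z ∂(volume.restrict (kCyl γ
        ((0, 0, 0) : ℝ × EuclideanSpace ℝ (Fin d) × EuclideanSpace ℝ (Fin d)))),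
      Tendsto (fun r : ℝ =>
          kAvg (kCyl r (kMul z (min (-z.1) (r ^ 2 / 2), 0, 0))) (fun w => G w ^ q))
        (𝓝[>] 0) (𝓝 (ENNReal.ofReal (G z ^ q))))
    (s : ℝ) (hs : 1 < s)
    -- 𝒢: union of all cylinders selected by the stopping-time condition
    (𝒢 : Set (ℝ × EuclideanSpace ℝ (Fin d) × EuclideanSpace ℝ (Fin d)))
    (h𝒢 : 𝒢 = ⋃₀ {S | ∃ z₀ ∈ kCyl γ
        ((0, 0, 0) : ℝ × EuclideanSpace ℝ (Fin d) × EuclideanSpace ℝ (Fin d)),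
      ∃ r : ℝ, 0 < r ∧ r ≤ kZeta γ z₀ ∧ S = kCyl r z₀ ∧ S ⊆ kCyl γ (0, 0, 0) ∧
        kAvg (kCyl5 r z₀) (fun z => G z ^ q) < ENNReal.ofReal (s ^ q) ∧
        ENNReal.ofReal (s ^ q) ≤ kAvg S (fun z => G z ^ q)}) :
    volume (({z | G z > s} ∩ kCyl γ (0, 0, 0)) \ 𝒢) = 0 := by
  classical
  have hQm : MeasurableSet (kCyl γ
      ((0,0,0) : ℝ × EuclideanSpace ℝ (Fin d) × EuclideanSpace ℝ (Fin d))) :=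
    measurableSet_kCyl _ _
  have hq0 : 0 < q := by linarith
  have hs0 : 0 < s := by linarith
  have hsq1 : 1 < s ^ q := by
    rw [Real.one_lt_rpow_iff hs0.le]; exact Or.inl ⟨hs, hq0⟩
  have hc1 : (1:ℝ≥0∞) < ENNReal.ofReal (s ^ q) := by
    rw [← ENNReal.ofReal_one, ENNReal.ofReal_lt_ofReal_iff (by linarith)]
    exact hsq1
  -- the key pointwise statement
  have key : ∀ z ∈ kCyl γ ((0,0,0) :
        ℝ × EuclideanSpace ℝ (Fin d) × EuclideanSpace ℝ (Fin d)), s < G z →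
      Tendsto (fun r : ℝ =>
          kAvg (kCyl r (kMul z (min (-z.1) (r ^ 2 / 2), 0, 0))) (fun w => G w ^ q))
        (𝓝[>] 0) (𝓝 (ENNReal.ofReal (G z ^ q))) → z ∈ 𝒢 := by
    intro z hzQ hGz hT
    obtain ⟨hζpos, -, -, -⟩ := kZeta_bounds hγ hzQ
    have hz2 : z.1 ≤ 0 := (mem_kCyl0.mp hzQ).2.1
    set ζ := kZeta γ z with hζdef
    set A : ℝ → ℝ≥0∞ := fun r =>
      kAvg (kCyl r (kMul z (min (-z.1) (r ^ 2 / 2), 0, 0))) (fun w => G w ^ q) with hAdef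
    -- shift properties for any 0 < ρ ≤ (9/10) ζ
    have hshift : ∀ ρ : ℝ, 0 < ρ → ρ ≤ (9/10) * ζ →
        kMul z ((min (-z.1) (ρ^2/2), 0, 0) :
          ℝ × EuclideanSpace ℝ (Fin d) × EuclideanSpace ℝ (Fin d)) ∈ kCyl γ (0,0,0) ∧
        (9/10) * ζ ≤ kZeta γ (kMul z (min (-z.1) (ρ^2/2), 0, 0)) ∧
        kZeta γ (kMul z (min (-z.1) (ρ^2/2), 0, 0)) ≤ (11/10) * ζ := by
      intro ρ hρ0 hρζ
      have h0 : 0 ≤ min (-z.1) (ρ^2/2) := le_min (by linarith) (by positivity)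
      have h1 : min (-z.1) (ρ^2/2) ≤ -z.1 := min_le_left _ _
      have h2 : min (-z.1) (ρ^2/2) ≤ ζ^2/2 := by
        refine (min_le_right _ _).trans ?_
        nlinarith
      exact kShift hγ hzQ h0 h1 h2
    set R := (9/10) * ζ with hRdef
    have hR0 : 0 < R := by positivity
    obtain ⟨hmR, hlowR, hupR⟩ := hshift R hR0 le_rfl
    have hAR : A R ≤ 1 := by
      refine hnorm _ hmR R hR0 (by nlinarith) (kCyl_subset hγ hmR hR0 ?_)
      rw [hRdef] at hlowR ⊢
      exact hlowR
    -- small radii have large averages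
    have hGsq : ENNReal.ofReal (s ^ q) < ENNReal.ofReal (G z ^ q) := by
      rw [ENNReal.ofReal_lt_ofReal_iff (Real.rpow_pos_of_pos (lt_trans hs0 hGz) q)]
      exact Real.rpow_lt_rpow hs0.le hGz hq0
    have hev : ∀ᶠ r in 𝓝[>] (0:ℝ), ENNReal.ofReal (s ^ q) < A r :=
      hT.eventually (eventually_gt_nhds hGsq)
    rw [eventually_nhdsWithin_iff, Metric.eventually_nhds_iff] at hev
    obtain ⟨ε, hε0, hε⟩ := hev
    obtain ⟨n, hn⟩ := pow_unbounded_of_one_lt (R / ε) (by norm_num : (1:ℝ) < 5)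
    have h5n : (0:ℝ) < 5 ^ n := by positivity
    have hRn : R / 5 ^ n < ε := by
      rw [div_lt_iff₀ h5n]
      rw [div_lt_iff₀ hε0] at hn
      linarith
    have hPn : ENNReal.ofReal (s ^ q) ≤ A (R / 5 ^ n) := by
      refine (hε ?_ ?_).le
      · rw [Real.dist_eq, sub_zero, abs_of_pos (by positivity)]
        exact hRn
      · exact mem_Ioi.mpr (by positivity)
    have hex : ∃ k, ENNReal.ofReal (s ^ q) ≤ A (R / 5 ^ k) := ⟨n, hPn⟩
    set m := Nat.find hex with hmdef
    have hm' : ENNReal.ofReal (s ^ q) ≤ A (R / 5 ^ m) := Nat.find_spec hex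
    have hm0 : m ≠ 0 := by
      intro h
      rw [h, pow_zero, div_one] at hm'
      exact absurd (hm'.trans hAR) (not_le.mpr hc1)
    obtain ⟨k, hk⟩ : ∃ k, m = k + 1 :=
      ⟨m - 1, (Nat.succ_pred_eq_of_pos (Nat.pos_of_ne_zero hm0)).symm⟩
    have hms : ¬ ENNReal.ofReal (s ^ q) ≤ A (R / 5 ^ k) :=
      Nat.find_min hex (by omega)
    set r := R / 5 ^ m with hrdef
    have hr0 : 0 < r := by positivity
    have h5r : 5 * r = R / 5 ^ k := by
      rw [hrdef, hk, pow_succ]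
      field_simp
    have h1p : (1:ℝ) ≤ 5 ^ m := one_le_pow₀ (by norm_num : (1:ℝ) ≤ 5)
    have hrR : r ≤ (9/10) * ζ := by
      rw [hrdef, ← hRdef]
      exact div_le_self hR0.le h1p
    obtain ⟨hm₁, hm₂, -⟩ := hshift r hr0 hrR
    rw [h𝒢]
    refine mem_sUnion.mpr ⟨kCyl r (kMul z (min (-z.1) (r^2/2), 0, 0)),
      ⟨kMul z (min (-z.1) (r^2/2), 0, 0), hm₁, r, hr0, ?_, rfl,
        kCyl_subset hγ hm₁ hr0 ?_, ?_, ?_⟩, ?_⟩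
    · exact le_trans (hrR.trans (by linarith)) hm₂
    · exact le_trans (hrR.trans (by linarith)) hm₂
    · rw [kCyl5_eq hz2 r]
      rw [← h5r] at hms
      exact not_le.mp hms
    · exact hm'
    · exact mem_kCyl_self hz2 hr0
  -- conclude
  have hsub : ({z | G z > s} ∩ kCyl γ (0, 0, 0)) \ 𝒢 ⊆
      {z : ℝ × EuclideanSpace ℝ (Fin d) × EuclideanSpace ℝ (Fin d) |
        ¬ Tendsto (fun r : ℝ =>
          kAvg (kCyl r (kMul z (min (-z.1) (r ^ 2 / 2), 0, 0))) (fun w => G w ^ q))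
        (𝓝[>] 0) (𝓝 (ENNReal.ofReal (G z ^ q)))} ∩ kCyl γ (0, 0, 0) := by
    rintro z ⟨⟨hG, hzQ⟩, hn𝒢⟩
    exact ⟨fun hT => hn𝒢 (key z hzQ hG hT), hzQ⟩
  refine measure_mono_null hsub ?_
  rw [← Measure.restrict_apply' hQm]
  exact ae_iff.mp hLeb
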